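/- If S is a crown of a graph G, then the subgraph induced by N[S] is a König–Egerváry graph, i.e., α(G[N[S]]) + μ(G[N[S]]) = |N[S]|. -/

import Mathlib

open Finset

variable {V : Type*}

namespace CrownPaper

variable [Fintype V] [DecidableEq V]

/-- The (open) neighborhood of a finite set of vertices. -/
def nbrs (G : SimpleGraph V) [DecidableRel G.Adj] (A : Finset V) : Finset V :=
  univ.filter (fun v => ∃ a ∈ A, G.Adj v a)

/-- The closed neighborhood `N[A] = A ∪ N(A)`. -/
def closedNbrs (G : SimpleGraph V) [DecidableRel G.Adj] (A : Finset V) : Finset V :=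
  A ∪ nbrs G A

/-- `S` is an independent set of `G`. -/
def IsIndep (G : SimpleGraph V) (S : Finset V) : Prop :=
  ∀ a ∈ S, ∀ b ∈ S, ¬ G.Adj a b

/-- The difference `d(S) = |S| - |N(S)|`. -/
def diff (G : SimpleGraph V) [DecidableRel G.Adj] (S : Finset V) : ℤ :=
  (S.card : ℤ) - ((nbrs G S).card : ℤ)

/-- `S` is a critical independent set. -/
def IsCritIndep (G : SimpleGraph V) [DecidableRel G.Adj] (S : Finset V) : Prop :=
  IsIndep G S ∧ ∀ I : Finset V, IsIndep G I → diff G I ≤ diff G S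

/-- `S` is a crown: an independent set with a matching from `N(S)` into `S`. -/
def IsCrown (G : SimpleGraph V) [DecidableRel G.Adj] (S : Finset V) : Prop :=
  IsIndep G S ∧ ∃ f : V → V, (∀ v ∈ nbrs G S, f v ∈ S ∧ G.Adj v (f v)) ∧
    Set.InjOn f (nbrs G S : Set V)

/-- `S` is a local maximum independent set: a maximum independent set of `G[N[S]]`. -/
def IsLocalMaxIndep (G : SimpleGraph V) [DecidableRel G.Adj] (S : Finset V) : Prop :=
  IsIndep G S ∧ ∀ I : Finset V, IsIndep G I → I ⊆ closedNbrs G S → I.card ≤ S.card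

/-- The independence number. -/
noncomputable def alpha (G : SimpleGraph V) : ℕ :=
  sSup {n | ∃ S : Finset V, IsIndep G S ∧ S.card = n}

/-- `M` is a matching of `G`, given as a finite set of (ordered) edges. -/
def IsMatching (G : SimpleGraph V) (M : Finset (V × V)) : Prop :=
  (∀ e ∈ M, G.Adj e.1 e.2) ∧
  ∀ e ∈ M, ∀ e' ∈ M, e ≠ e' →
    e.1 ≠ e'.1 ∧ e.1 ≠ e'.2 ∧ e.2 ≠ e'.1 ∧ e.2 ≠ e'.2

/-- The matching number. -/
noncomputable def mu (G : SimpleGraph V) : ℕ :=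
  sSup {n | ∃ M : Finset (V × V), IsMatching G M ∧ M.card = n}

/-- `G` has a perfect matching. -/
def HasPerfectMatching (G : SimpleGraph V) : Prop :=
  ∃ M : Finset (V × V), IsMatching G M ∧ ∀ v : V, ∃ e ∈ M, v = e.1 ∨ v = e.2

/-- `G` is a König–Egerváry graph: `α(G) + μ(G) = |V(G)|`. -/
def IsKonigEgervary (G : SimpleGraph V) : Prop :=
  alpha G + mu G = Fintype.card V

/-- `G` is bipartite. -/
def IsBipartite (G : SimpleGraph V) : Prop :=
  ∃ X : Set V, ∀ a b : V, G.Adj a b → (a ∈ X ↔ b ∉ X)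

end CrownPaper


namespace CrownPaper

lemma indep_add_matching_le {W : Type*} [Fintype W] [DecidableEq W] (H : SimpleGraph W)
    (I : Finset W) (hI : IsIndep H I) (M : Finset (W × W)) (hM : IsMatching H M) :
    I.card + M.card ≤ Fintype.card W := by
  classical
  set g : W × W → W := fun e => if e.1 ∈ I then e.2 else e.1 with hg
  have himg : ∀ e ∈ M, g e ∉ I := by
    intro e he
    by_cases h1 : e.1 ∈ I
    · simp only [hg, if_pos h1]
      intro h2
      exact hI e.1 h1 e.2 h2 (hM.1 e he)
    · simp only [hg, if_neg h1]
      exact h1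
  have hinj : Set.InjOn g (M : Set (W × W)) := by
    intro e he e' he' heq
    by_contra hne
    obtain ⟨h1, h2, h3, h4⟩ := hM.2 e he e' he' hne
    simp only [hg] at heq
    split_ifs at heq <;> simp_all
  have hcard : (M.image g).card = M.card := Finset.card_image_of_injOn hinj
  have hdisj : Disjoint I (M.image g) := by
    rw [Finset.disjoint_left]
    intro a haI haImg
    obtain ⟨e, he, rfl⟩ := Finset.mem_image.mp haImg
    exact himg e he haI
  calc I.card + M.card = (I ∪ M.image g).card := by
        rw [Finset.card_union_of_disjoint hdisj, hcard]
    _ ≤ Fintype.card W := by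
        simpa using Finset.card_le_univ (I ∪ M.image g)

end CrownPaper

open CrownPaper

theorem crown_closed_nbhd_konig_egervary (G : SimpleGraph V) [Fintype V] [DecidableEq V]
    [DecidableRel G.Adj] (S : Finset V) (hS : IsCrown G S) :
    IsKonigEgervary (G.induce (↑(closedNbrs G S) : Set V)) := by

  classical
  obtain ⟨hind, f, hf, hfinj⟩ := hS
  set C := closedNbrs G S with hC
  set H := G.induce (↑C : Set V) with hH
  have hSsub : S ⊆ C := Finset.subset_union_left
  have hNsub : nbrs G S ⊆ C := Finset.subset_union_right
  have hdisjSN : Disjoint S (nbrs G S) := by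
    rw [Finset.disjoint_left]
    intro a haS haN
    simp only [nbrs, Finset.mem_filter] at haN
    obtain ⟨-, b, hbS, hab⟩ := haN
    exact hind a haS b hbS hab
  have hcardC : Fintype.card (↑C : Set V) = S.card + (nbrs G S).card := by
    rw [show Fintype.card (↑C : Set V) = C.card from Fintype.card_coe C, hC,
      closedNbrs, Finset.card_union_of_disjoint hdisjSN]
  -- independent set of size |S| in H
  set I' : Finset (↑C : Set V) :=
    S.attach.map ⟨fun a => ⟨a.1, by simpa using hSsub a.2⟩,
      fun a b hab => by exact Subtype.ext (congrArg (fun p : (↑C : Set V) => p.1) hab)⟩ with hI'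
  have hI'card : I'.card = S.card := by simp [hI']
  have hI'indep : IsIndep H I' := by
    intro a ha b hb hadj
    simp only [hI', Finset.mem_map, Finset.mem_attach, true_and,
      Function.Embedding.coeFn_mk] at ha hb
    obtain ⟨⟨x, hx⟩, rfl⟩ := ha
    obtain ⟨⟨y, hy⟩, rfl⟩ := hb
    exact hind x hx y hy hadj
  -- matching of size |N(S)| in H
  set M' : Finset ((↑C : Set V) × (↑C : Set V)) :=
    (nbrs G S).attach.map ⟨fun v => (⟨v.1, by simpa using hNsub v.2⟩,
        ⟨f v.1, by simpa using hSsub (hf v.1 v.2).1⟩),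
      fun a b hab => Subtype.ext (congrArg (fun p => p.1.1) hab)⟩ with hM'
  have hM'card : M'.card = (nbrs G S).card := by simp [hM']
  have hM'match : IsMatching H M' := by
    constructor
    · intro e he
      simp only [hM', Finset.mem_map, Finset.mem_attach, true_and,
        Function.Embedding.coeFn_mk] at he
      obtain ⟨⟨v, hv⟩, rfl⟩ := he
      exact (hf v hv).2
    · intro e he e' he' hne
      simp only [hM', Finset.mem_map, Finset.mem_attach, true_and,
        Function.Embedding.coeFn_mk] at he he'
      obtain ⟨⟨v, hv⟩, rfl⟩ := he
      obtain ⟨⟨w, hw⟩, rfl⟩ := he'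
      have hvw : v ≠ w := by
        intro h; subst h; exact hne rfl
      have hSN : ∀ x ∈ nbrs G S, ∀ y ∈ S, x ≠ y := by
        intro x hx y hy h; subst h
        exact (Finset.disjoint_right.mp hdisjSN hx) hy
      refine ⟨?_, ?_, ?_, ?_⟩ <;> intro h <;>
        have := congrArg Subtype.val h
      · exact hvw this
      · exact hSN v hv (f w) (hf w hw).1 this
      · exact hSN w hw (f v) (hf v hv).1 this.symm
      · exact hvw (hfinj (by simpa using hv) (by simpa using hw) this)
  -- bounds on alpha and mu
  have hbddA : BddAbove {n | ∃ T : Finset (↑C : Set V), IsIndep H T ∧ T.card = n} := by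
    refine ⟨Fintype.card (↑C : Set V), ?_⟩
    rintro n ⟨T, -, rfl⟩
    simpa using Finset.card_le_univ T
  have hbddM : BddAbove {n | ∃ M : Finset ((↑C : Set V) × (↑C : Set V)),
      IsMatching H M ∧ M.card = n} := by
    refine ⟨Fintype.card ((↑C : Set V) × (↑C : Set V)), ?_⟩
    rintro n ⟨M, -, rfl⟩
    simpa using Finset.card_le_univ M
  have hA_lb : S.card ≤ alpha H := by
    rw [← hI'card]
    exact le_csSup hbddA ⟨I', hI'indep, rfl⟩
  have hM_lb : (nbrs G S).card ≤ mu H := by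
    rw [← hM'card]
    exact le_csSup hbddM ⟨M', hM'match, rfl⟩
  have hA_mem : alpha H ∈ {n | ∃ T : Finset (↑C : Set V), IsIndep H T ∧ T.card = n} :=
    Nat.sSup_mem ⟨0, ∅, fun a ha => by simp at ha, Finset.card_empty⟩ hbddA
  have hM_mem : mu H ∈ {n | ∃ M : Finset ((↑C : Set V) × (↑C : Set V)),
      IsMatching H M ∧ M.card = n} :=
    Nat.sSup_mem ⟨0, ∅, ⟨fun e he => by simp at he, fun e he => by simp at he⟩,
      Finset.card_empty⟩ hbddM
  obtain ⟨T, hT, hTc⟩ := hA_mem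
  obtain ⟨M, hM, hMc⟩ := hM_mem
  have hub : alpha H + mu H ≤ Fintype.card (↑C : Set V) := by
    rw [← hTc, ← hMc]
    exact CrownPaper.indep_add_matching_le H T hT M hM
  have hlb : Fintype.card (↑C : Set V) ≤ alpha H + mu H := by
    rw [hcardC]; exact Nat.add_le_add hA_lb hM_lb
  exact le_antisymm hub hlb
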